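/- As formal power series over ℚ, (1 - 8x)^(3/2) = 1 - 12x + Σ_{n≥2} 3 · 2^(n+2) · (2n-4)!/(n!(n-2)!) · x^n. -/

import Mathlib

open PowerSeries

/-- The generalized binomial coefficient `C(r, k)` for a rational `r`. -/
def qchoose (r : ℚ) (k : ℕ) : ℚ :=
  (∏ i ∈ Finset.range k, (r - i)) / Nat.factorial k

/-- The formal power series `(1 - 8x)^{3/2} = Σ_k C(3/2, k) (-8)^k x^k`. -/
def oneSub8XPow32 : PowerSeries ℚ :=
  PowerSeries.mk fun k => qchoose (3 / 2) k * (-8) ^ k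

lemma qchoose_succ (r : ℚ) (k : ℕ) :
    qchoose r (k + 1) = qchoose r k * (r - k) / (k + 1) := by
  simp only [qchoose, Finset.prod_range_succ, Nat.factorial_succ]
  push_cast
  have h1 : (Nat.factorial k : ℚ) ≠ 0 := Nat.cast_ne_zero.mpr (Nat.factorial_ne_zero k)
  have h2 : (k : ℚ) + 1 ≠ 0 := by positivity
  field_simp

lemma key (m : ℕ) :
    qchoose (3 / 2) (m + 2) * (-8) ^ (m + 2) =
      3 * 2 ^ (m + 4) * (Nat.factorial (2 * m) : ℚ) /
        (Nat.factorial (m + 2) * Nat.factorial m) := by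
  induction m with
  | zero =>
    simp [qchoose, Finset.prod_range_succ]
    norm_num
  | succ m ih =>
    have h1 : (Nat.factorial m : ℚ) ≠ 0 := Nat.cast_ne_zero.mpr (Nat.factorial_ne_zero m)
    have h2 : (Nat.factorial (m + 2) : ℚ) ≠ 0 := Nat.cast_ne_zero.mpr (Nat.factorial_ne_zero _)
    have e1 : m + 1 + 2 = (m + 2) + 1 := by ring
    rw [e1, qchoose_succ]
    have e2 : 2 * (m + 1) = (2 * m + 1) + 1 := by ring
    rw [e2]
    have e3 : Nat.factorial ((2 * m + 1) + 1) = (2 * m + 2) * ((2 * m + 1) * Nat.factorial (2 * m)) := by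
      rw [Nat.factorial_succ, Nat.factorial_succ]
    have e4 : Nat.factorial (m + 1 + 2) = (m + 3) * Nat.factorial (m + 2) := by
      rw [show m + 1 + 2 = (m + 2) + 1 by ring, Nat.factorial_succ]
    have e5 : Nat.factorial (m + 1) = (m + 1) * Nat.factorial m := Nat.factorial_succ m
    rw [e3, e4, e5]
    have h3 : ((m : ℚ) + 2) + 1 ≠ 0 := by positivity
    push_cast
    rw [show (m : ℕ) + 2 + 1 = m + 3 from rfl] at *
    have : qchoose (3 / 2) (m + 2) * (3 / 2 - ((m : ℚ) + 2)) / ((m : ℚ) + 2 + 1) * (-8) ^ (m + 2 + 1)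
        = (qchoose (3 / 2) (m + 2) * (-8) ^ (m + 2)) * ((3 / 2 - ((m : ℚ) + 2)) * (-8) / ((m : ℚ) + 3)) := by
      rw [pow_succ]
      field_simp
      ring
    rw [this, ih]
    have h4 : (m : ℚ) + 3 ≠ 0 := by positivity
    field_simp
    ring

theorem oneSub8XPow32_coeff :
    oneSub8XPow32 = PowerSeries.mk fun n =>
      if n = 0 then 1
      else if n = 1 then -12
      else 3 * 2 ^ (n + 2) * (Nat.factorial (2 * n - 4) : ℚ) /
        (Nat.factorial n * Nat.factorial (n - 2)) := by
  ext n
  simp only [oneSub8XPow32, coeff_mk]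
  match n with
  | 0 => simp [qchoose]
  | 1 => simp [qchoose, Finset.prod_range_succ]; norm_num
  | (m + 2) =>
    have := key m
    simp only [show m + 2 ≠ 0 from by omega, show m + 2 ≠ 1 from by omega, if_false]
    rw [show 2 * (m + 2) - 4 = 2 * m by omega, show m + 2 - 2 = m by omega]
    rw [this]
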